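/- Let k be a field, let ψ : k[x,y] → k[t] × k[t] × k[t] be the k-algebra homomorphism with ψ(x) = (t, t, 0) and ψ(y) = (t, 0, t), and let R be the image of ψ. Then the conductor of R in k[t]^3, namely {(a,b,c) ∈ k[t]^3 : (a,b,c)·(f,g,h) ∈ R for all (f,g,h) ∈ k[t]^3}, equals t^2·k[t] × t^2·k[t] × t^2·k[t]; it is the ideal of k[t]^3 generated by the three elements ψ(x^2) = (t^2, t^2, 0), ψ(y^2) = (t^2, 0, t^2) and ψ(xy) = (t^2, 0, 0). -/

import Mathlib

open Polynomial

namespace ThreeLinesAux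

variable {k : Type*} [Field k]

lemma aux_M {S : Type*} [CommRing S] [Algebra k S] (v : Fin 2 → S) (s : S)
    (hs : ∀ i, s * v i = 0) (P : MvPolynomial (Fin 2) k) :
    s * MvPolynomial.aeval v P = s * MvPolynomial.aeval (fun _ => (0 : S)) P := by
  induction P using MvPolynomial.induction_on with
  | C a => simp
  | add P Q hP hQ => simp only [map_add, mul_add, hP, hQ]
  | mul_X P i hP =>
    simp only [map_mul, MvPolynomial.aeval_X]
    have h1 : s * (MvPolynomial.aeval v P * v i) = (s * v i) * MvPolynomial.aeval v P := by ring
    rw [h1, hs i, zero_mul]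
    simp

lemma aux_L {S : Type*} [CommRing S] [Algebra k S] (s : S) (hs : s * s = 0)
    (P : MvPolynomial (Fin 2) k) :
    MvPolynomial.aeval ![s, s] P + MvPolynomial.aeval (fun _ => (0 : S)) P =
      MvPolynomial.aeval ![s, (0 : S)] P + MvPolynomial.aeval ![(0 : S), s] P := by
  have h0s : ∀ i, s * (![(0 : S), s] : Fin 2 → S) i = 0 := by
    intro i; fin_cases i <;> simp [hs]
  have hs0 : ∀ i, s * (![s, (0 : S)] : Fin 2 → S) i = 0 := by
    intro i; fin_cases i <;> simp [hs]
  induction P using MvPolynomial.induction_on with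
  | C a => simp
  | add P Q hP hQ =>
    simp only [map_add]
    linear_combination hP + hQ
  | mul_X P i hP =>
    have hM1 : s * MvPolynomial.aeval ![(0 : S), s] P
        = s * MvPolynomial.aeval (fun _ => (0 : S)) P := aux_M _ s h0s P
    have hM2 : s * MvPolynomial.aeval ![s, (0 : S)] P
        = s * MvPolynomial.aeval (fun _ => (0 : S)) P := aux_M _ s hs0 P
    fin_cases i <;>
      simp only [map_mul, MvPolynomial.aeval_X, Matrix.cons_val_zero, Matrix.cons_val_one,
        Matrix.head_cons, Fin.mk_zero, Fin.mk_one, mul_zero, add_zero, zero_add]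
    · linear_combination s * hP + hM1
    · linear_combination s * hP + hM2

variable (k)

noncomputable abbrev vv : Fin 2 → Polynomial k × Polynomial k × Polynomial k :=
  ![(X, X, 0), (X, 0, X)]

noncomputable abbrev Ik : Ideal (Polynomial k) := Ideal.span ({X ^ 2} : Set (Polynomial k))

lemma aeval_E {S : Type*} [CommRing S] [Algebra k S] (a b c : Polynomial k) (w : Fin 2 → S) :
    MvPolynomial.aeval w
        (MvPolynomial.X 0 ^ 2 * Polynomial.aeval (MvPolynomial.X 0) b
          + MvPolynomial.X 1 ^ 2 * Polynomial.aeval (MvPolynomial.X 1) c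
          + MvPolynomial.X 0 * MvPolynomial.X 1 * Polynomial.aeval (MvPolynomial.X 1) (a - b - c)
          : MvPolynomial (Fin 2) k)
      = w 0 ^ 2 * Polynomial.aeval (w 0) b + w 1 ^ 2 * Polynomial.aeval (w 1) c
        + w 0 * w 1 * Polynomial.aeval (w 1) (a - b - c) := by
  have h0 : ∀ q : Polynomial k,
      MvPolynomial.aeval w (Polynomial.aeval (MvPolynomial.X 0 : MvPolynomial (Fin 2) k) q)
        = Polynomial.aeval (w 0) q := fun q => by
    rw [← Polynomial.aeval_algHom_apply, MvPolynomial.aeval_X]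
  have h1 : ∀ q : Polynomial k,
      MvPolynomial.aeval w (Polynomial.aeval (MvPolynomial.X 1 : MvPolynomial (Fin 2) k) q)
        = Polynomial.aeval (w 1) q := fun q => by
    rw [← Polynomial.aeval_algHom_apply, MvPolynomial.aeval_X]
  simp only [map_add, map_mul, map_pow, MvPolynomial.aeval_X, h0, h1]

lemma mem_range (a b c : Polynomial k) :
    ((X : Polynomial k) ^ 2 * a, (X : Polynomial k) ^ 2 * b, (X : Polynomial k) ^ 2 * c) ∈
      (MvPolynomial.aeval (vv k) :
        MvPolynomial (Fin 2) k →ₐ[k] Polynomial k × Polynomial k × Polynomial k).range := by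
  classical
  set E : MvPolynomial (Fin 2) k :=
    MvPolynomial.X 0 ^ 2 * Polynomial.aeval (MvPolynomial.X 0) b
      + MvPolynomial.X 1 ^ 2 * Polynomial.aeval (MvPolynomial.X 1) c
      + MvPolynomial.X 0 * MvPolynomial.X 1 * Polynomial.aeval (MvPolynomial.X 1) (a - b - c)
    with hE
  have expand : ∀ {S : Type _} [CommRing S] [Algebra k S] (w : Fin 2 → S),
      MvPolynomial.aeval w E
        = w 0 ^ 2 * Polynomial.aeval (w 0) b + w 1 ^ 2 * Polynomial.aeval (w 1) c
          + w 0 * w 1 * Polynomial.aeval (w 1) (a - b - c) := by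
    intro S _ _ w
    rw [hE]
    exact aeval_E k a b c w
  refine ⟨E, ?_⟩
  have hfst : (MvPolynomial.aeval (vv k) E).1 = (X : Polynomial k) ^ 2 * a := by
    have h := MvPolynomial.comp_aeval_apply (f := vv k)
      (AlgHom.fst k (Polynomial k) (Polynomial k × Polynomial k)) E
    have hw : (fun i => (AlgHom.fst k (Polynomial k) (Polynomial k × Polynomial k)) (vv k i))
        = ![(X : Polynomial k), X] := by funext i; fin_cases i <;> rfl
    rw [hw] at h
    rw [show (MvPolynomial.aeval (vv k) E).1
        = (AlgHom.fst k (Polynomial k) (Polynomial k × Polynomial k))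
            (MvPolynomial.aeval (vv k) E) from rfl, h, expand]
    simp only [Matrix.cons_val_zero, Matrix.cons_val_one, Matrix.head_cons,
      Polynomial.aeval_X_left_apply, map_sub]
    ring
  have hsnd : (MvPolynomial.aeval (vv k) E).2.1 = (X : Polynomial k) ^ 2 * b := by
    have h := MvPolynomial.comp_aeval_apply (f := vv k)
      ((AlgHom.fst k (Polynomial k) (Polynomial k)).comp
        (AlgHom.snd k (Polynomial k) (Polynomial k × Polynomial k))) E
    have hw : (fun i => ((AlgHom.fst k (Polynomial k) (Polynomial k)).comp
          (AlgHom.snd k (Polynomial k) (Polynomial k × Polynomial k))) (vv k i))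
        = ![(X : Polynomial k), 0] := by funext i; fin_cases i <;> rfl
    rw [hw] at h
    rw [show (MvPolynomial.aeval (vv k) E).2.1
        = ((AlgHom.fst k (Polynomial k) (Polynomial k)).comp
            (AlgHom.snd k (Polynomial k) (Polynomial k × Polynomial k)))
            (MvPolynomial.aeval (vv k) E) from rfl, h, expand]
    simp [Polynomial.aeval_X_left_apply]
  have hthd : (MvPolynomial.aeval (vv k) E).2.2 = (X : Polynomial k) ^ 2 * c := by
    have h := MvPolynomial.comp_aeval_apply (f := vv k)
      ((AlgHom.snd k (Polynomial k) (Polynomial k)).comp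
        (AlgHom.snd k (Polynomial k) (Polynomial k × Polynomial k))) E
    have hw : (fun i => ((AlgHom.snd k (Polynomial k) (Polynomial k)).comp
          (AlgHom.snd k (Polynomial k) (Polynomial k × Polynomial k))) (vv k i))
        = ![(0 : Polynomial k), X] := by funext i; fin_cases i <;> rfl
    rw [hw] at h
    rw [show (MvPolynomial.aeval (vv k) E).2.2
        = ((AlgHom.snd k (Polynomial k) (Polynomial k)).comp
            (AlgHom.snd k (Polynomial k) (Polynomial k × Polynomial k)))
            (MvPolynomial.aeval (vv k) E) from rfl, h, expand]
    simp [Polynomial.aeval_X_left_apply]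
  exact Prod.ext_iff.mpr ⟨hfst, Prod.ext_iff.mpr ⟨hsnd, hthd⟩⟩

lemma rel (P : MvPolynomial (Fin 2) k) :
    Ideal.Quotient.mk (Ik k) ((MvPolynomial.aeval (vv k) P).1)
        + Polynomial.aeval (0 : Polynomial k ⧸ Ik k) ((MvPolynomial.aeval (vv k) P).2.1)
      = Ideal.Quotient.mk (Ik k) ((MvPolynomial.aeval (vv k) P).2.1)
        + Ideal.Quotient.mk (Ik k) ((MvPolynomial.aeval (vv k) P).2.2) ∧
    Polynomial.aeval (0 : Polynomial k ⧸ Ik k) ((MvPolynomial.aeval (vv k) P).1)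
      = Polynomial.aeval (0 : Polynomial k ⧸ Ik k) ((MvPolynomial.aeval (vv k) P).2.1) := by
  set A := Polynomial k ⧸ Ik k
  set φ : Polynomial k →ₐ[k] A := Ideal.Quotient.mkₐ k (Ik k) with hφ
  set ε : A := φ X with hε
  have hεε : ε * ε = 0 := by
    rw [hε, ← map_mul, ← sq]
    exact Ideal.Quotient.eq_zero_iff_mem.mpr (Ideal.mem_span_singleton_self _)
  -- the four evaluation maps
  have h1 := MvPolynomial.comp_aeval_apply (f := vv k)
    (φ.comp (AlgHom.fst k (Polynomial k) (Polynomial k × Polynomial k))) P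
  have h2 := MvPolynomial.comp_aeval_apply (f := vv k)
    (φ.comp ((AlgHom.fst k (Polynomial k) (Polynomial k)).comp
      (AlgHom.snd k (Polynomial k) (Polynomial k × Polynomial k)))) P
  have h3 := MvPolynomial.comp_aeval_apply (f := vv k)
    (φ.comp ((AlgHom.snd k (Polynomial k) (Polynomial k)).comp
      (AlgHom.snd k (Polynomial k) (Polynomial k × Polynomial k)))) P
  have h4 := MvPolynomial.comp_aeval_apply (f := vv k)
    ((Polynomial.aeval (0 : A) : Polynomial k →ₐ[k] A).comp
      ((AlgHom.fst k (Polynomial k) (Polynomial k)).comp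
        (AlgHom.snd k (Polynomial k) (Polynomial k × Polynomial k)))) P
  have h5 := MvPolynomial.comp_aeval_apply (f := vv k)
    ((Polynomial.aeval (0 : A) : Polynomial k →ₐ[k] A).comp
      (AlgHom.fst k (Polynomial k) (Polynomial k × Polynomial k))) P
  have hw1 : (fun i => (φ.comp (AlgHom.fst k (Polynomial k)
      (Polynomial k × Polynomial k))) (vv k i)) = ![ε, ε] := by
    funext i; fin_cases i <;> rfl
  have hw2 : (fun i => (φ.comp ((AlgHom.fst k (Polynomial k) (Polynomial k)).comp
      (AlgHom.snd k (Polynomial k) (Polynomial k × Polynomial k)))) (vv k i))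
      = ![ε, (0 : A)] := by
    funext i; fin_cases i
    · rfl
    · exact map_zero φ
  have hw3 : (fun i => (φ.comp ((AlgHom.snd k (Polynomial k) (Polynomial k)).comp
      (AlgHom.snd k (Polynomial k) (Polynomial k × Polynomial k)))) (vv k i))
      = ![(0 : A), ε] := by
    funext i; fin_cases i
    · exact map_zero φ
    · rfl
  have hw4 : (fun i => ((Polynomial.aeval (0 : A) : Polynomial k →ₐ[k] A).comp
      ((AlgHom.fst k (Polynomial k) (Polynomial k)).comp
        (AlgHom.snd k (Polynomial k) (Polynomial k × Polynomial k)))) (vv k i))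
      = (fun _ => (0 : A)) := by
    funext i; fin_cases i
    · exact Polynomial.aeval_X (0 : A)
    · exact map_zero (Polynomial.aeval (0 : A) : Polynomial k →ₐ[k] A)
  have hw5 : (fun i => ((Polynomial.aeval (0 : A) : Polynomial k →ₐ[k] A).comp
      (AlgHom.fst k (Polynomial k) (Polynomial k × Polynomial k))) (vv k i))
      = (fun _ => (0 : A)) := by
    funext i; fin_cases i
    · exact Polynomial.aeval_X (0 : A)
    · exact Polynomial.aeval_X (0 : A)
  rw [hw1] at h1
  rw [hw2] at h2
  rw [hw3] at h3
  rw [hw4] at h4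
  rw [hw5] at h5
  constructor
  · have hL := aux_L ε hεε P
    calc Ideal.Quotient.mk (Ik k) ((MvPolynomial.aeval (vv k) P).1)
          + Polynomial.aeval (0 : A) ((MvPolynomial.aeval (vv k) P).2.1)
        = MvPolynomial.aeval ![ε, ε] P + MvPolynomial.aeval (fun _ => (0 : A)) P := by
          rw [← h1, ← h4]; rfl
      _ = MvPolynomial.aeval ![ε, (0 : A)] P + MvPolynomial.aeval ![(0 : A), ε] P := hL
      _ = _ := by rw [← h2, ← h3]; rfl
  · calc Polynomial.aeval (0 : A) ((MvPolynomial.aeval (vv k) P).1)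
        = MvPolynomial.aeval (fun _ => (0 : A)) P := by rw [← h5]; rfl
      _ = Polynomial.aeval (0 : A) ((MvPolynomial.aeval (vv k) P).2.1) := by rw [← h4]; rfl

lemma conductor_iff (p : Polynomial k × Polynomial k × Polynomial k) :
    (∀ q : Polynomial k × Polynomial k × Polynomial k,
        p * q ∈ (MvPolynomial.aeval (vv k) :
          MvPolynomial (Fin 2) k →ₐ[k] Polynomial k × Polynomial k × Polynomial k).range) ↔
      (p.1 ∈ Ik k ∧ p.2.1 ∈ Ik k ∧ p.2.2 ∈ Ik k) := by
  constructor
  · intro h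
    refine ⟨?_, ?_, ?_⟩
    · obtain ⟨P, hP⟩ := h (1, 0, 0)
      have hP' : MvPolynomial.aeval (vv k) P = p * (1, 0, 0) := hP
      have hz : MvPolynomial.aeval (vv k) P = (p.1, 0, 0) := by
        rw [hP']
        refine Prod.ext_iff.mpr ⟨?_, Prod.ext_iff.mpr ⟨?_, ?_⟩⟩ <;>
          simp [Prod.fst_mul, Prod.snd_mul]
      have := (rel k P).1
      rw [hz] at this
      simp only [map_zero, add_zero, zero_add] at this
      exact Ideal.Quotient.eq_zero_iff_mem.mp this
    · obtain ⟨P, hP⟩ := h (0, 1, 0)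
      have hP' : MvPolynomial.aeval (vv k) P = p * (0, 1, 0) := hP
      have hz : MvPolynomial.aeval (vv k) P = (0, p.2.1, 0) := by
        rw [hP']
        refine Prod.ext_iff.mpr ⟨?_, Prod.ext_iff.mpr ⟨?_, ?_⟩⟩ <;>
          simp [Prod.fst_mul, Prod.snd_mul]
      have h1 := (rel k P).1
      have h2 := (rel k P).2
      rw [hz] at h1 h2
      simp only [map_zero, add_zero, zero_add] at h1 h2
      rw [h1] at h2
      exact Ideal.Quotient.eq_zero_iff_mem.mp h2.symm
    · obtain ⟨P, hP⟩ := h (0, 0, 1)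
      have hP' : MvPolynomial.aeval (vv k) P = p * (0, 0, 1) := hP
      have hz : MvPolynomial.aeval (vv k) P = (0, 0, p.2.2) := by
        rw [hP']
        refine Prod.ext_iff.mpr ⟨?_, Prod.ext_iff.mpr ⟨?_, ?_⟩⟩ <;>
          simp [Prod.fst_mul, Prod.snd_mul]
      have h1 := (rel k P).1
      rw [hz] at h1
      simp only [map_zero, add_zero, zero_add] at h1
      exact Ideal.Quotient.eq_zero_iff_mem.mp h1.symm
  · rintro ⟨h1, h2, h3⟩ q
    obtain ⟨u1, hu1⟩ := Ideal.mem_span_singleton.mp h1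
    obtain ⟨u2, hu2⟩ := Ideal.mem_span_singleton.mp h2
    obtain ⟨u3, hu3⟩ := Ideal.mem_span_singleton.mp h3
    have hpq : p * q = ((X : Polynomial k) ^ 2 * (u1 * q.1),
        (X : Polynomial k) ^ 2 * (u2 * q.2.1), (X : Polynomial k) ^ 2 * (u3 * q.2.2)) := by
      refine Prod.ext_iff.mpr ⟨?_, Prod.ext_iff.mpr ⟨?_, ?_⟩⟩
      · rw [Prod.fst_mul, hu1]; ring
      · rw [Prod.snd_mul, Prod.fst_mul, hu2]; ring
      · rw [Prod.snd_mul, Prod.snd_mul, hu3]; ring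
    rw [hpq]
    exact mem_range k (u1 * q.1) (u2 * q.2.1) (u3 * q.2.2)

lemma span_iff (p : Polynomial k × Polynomial k × Polynomial k) :
    p ∈ Ideal.span
        ({((X ^ 2 : Polynomial k), (X ^ 2 : Polynomial k), (0 : Polynomial k)),
          ((X ^ 2 : Polynomial k), (0 : Polynomial k), (X ^ 2 : Polynomial k)),
          ((X ^ 2 : Polynomial k), (0 : Polynomial k), (0 : Polynomial k))} :
          Set (Polynomial k × Polynomial k × Polynomial k)) ↔
      (p.1 ∈ Ik k ∧ p.2.1 ∈ Ik k ∧ p.2.2 ∈ Ik k) := by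
  constructor
  · intro hp
    have hle : Ideal.span
        ({((X ^ 2 : Polynomial k), (X ^ 2 : Polynomial k), (0 : Polynomial k)),
          ((X ^ 2 : Polynomial k), (0 : Polynomial k), (X ^ 2 : Polynomial k)),
          ((X ^ 2 : Polynomial k), (0 : Polynomial k), (0 : Polynomial k))} :
          Set (Polynomial k × Polynomial k × Polynomial k))
        ≤ Ideal.prod (Ik k) (Ideal.prod (Ik k) (Ik k)) := by
      rw [Ideal.span_le]
      rintro x hx
      simp only [Set.mem_insert_iff, Set.mem_singleton_iff] at hx
      have hX2 : (X : Polynomial k) ^ 2 ∈ Ik k := Ideal.mem_span_singleton_self _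
      have h0 : (0 : Polynomial k) ∈ Ik k := Ideal.zero_mem _
      rcases hx with rfl | rfl | rfl
      · exact ⟨hX2, hX2, h0⟩
      · exact ⟨hX2, h0, hX2⟩
      · exact ⟨hX2, h0, h0⟩
    exact hle hp
  · rintro ⟨h1, h2, h3⟩
    obtain ⟨u1, hu1⟩ := Ideal.mem_span_singleton.mp h1
    obtain ⟨u2, hu2⟩ := Ideal.mem_span_singleton.mp h2
    obtain ⟨u3, hu3⟩ := Ideal.mem_span_singleton.mp h3
    have hpeq : p = ((X ^ 2 : Polynomial k), (X ^ 2 : Polynomial k), (0 : Polynomial k))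
          * ((0 : Polynomial k), u2, (0 : Polynomial k))
        + ((X ^ 2 : Polynomial k), (0 : Polynomial k), (X ^ 2 : Polynomial k))
          * ((0 : Polynomial k), (0 : Polynomial k), u3)
        + ((X ^ 2 : Polynomial k), (0 : Polynomial k), (0 : Polynomial k))
          * (u1, (0 : Polynomial k), (0 : Polynomial k)) := by
      refine Prod.ext_iff.mpr ⟨?_, Prod.ext_iff.mpr ⟨?_, ?_⟩⟩ <;>
        simp [Prod.fst_mul, Prod.snd_mul, Prod.fst_add, Prod.snd_add, hu1, hu2, hu3]
    rw [hpeq]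
    have hg1 : ((X ^ 2 : Polynomial k), (X ^ 2 : Polynomial k), (0 : Polynomial k)) ∈
        Ideal.span ({((X ^ 2 : Polynomial k), (X ^ 2 : Polynomial k), (0 : Polynomial k)),
          ((X ^ 2 : Polynomial k), (0 : Polynomial k), (X ^ 2 : Polynomial k)),
          ((X ^ 2 : Polynomial k), (0 : Polynomial k), (0 : Polynomial k))} :
          Set (Polynomial k × Polynomial k × Polynomial k)) := Ideal.subset_span (by simp)
    have hg2 : ((X ^ 2 : Polynomial k), (0 : Polynomial k), (X ^ 2 : Polynomial k)) ∈
        Ideal.span ({((X ^ 2 : Polynomial k), (X ^ 2 : Polynomial k), (0 : Polynomial k)),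
          ((X ^ 2 : Polynomial k), (0 : Polynomial k), (X ^ 2 : Polynomial k)),
          ((X ^ 2 : Polynomial k), (0 : Polynomial k), (0 : Polynomial k))} :
          Set (Polynomial k × Polynomial k × Polynomial k)) := Ideal.subset_span (by simp)
    have hg3 : ((X ^ 2 : Polynomial k), (0 : Polynomial k), (0 : Polynomial k)) ∈
        Ideal.span ({((X ^ 2 : Polynomial k), (X ^ 2 : Polynomial k), (0 : Polynomial k)),
          ((X ^ 2 : Polynomial k), (0 : Polynomial k), (X ^ 2 : Polynomial k)),
          ((X ^ 2 : Polynomial k), (0 : Polynomial k), (0 : Polynomial k))} :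
          Set (Polynomial k × Polynomial k × Polynomial k)) := Ideal.subset_span (by simp)
    exact Ideal.add_mem _ (Ideal.add_mem _ (Ideal.mul_mem_right _ _ hg1)
      (Ideal.mul_mem_right _ _ hg2)) (Ideal.mul_mem_right _ _ hg3)

end ThreeLinesAux

/-- The conductor of the image of `k[x,y] → k[t]³` (`x ↦ (t,t,0)`, `y ↦ (t,0,t)`,
the normalization of the three concurrent lines) in `k[t]³` is
`t²k[t] × t²k[t] × t²k[t]`, the ideal generated by the images of `x²`, `y²`, `xy`,
i.e. by `(t²,t²,0)`, `(t²,0,t²)` and `(t²,0,0)`. -/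
theorem conductor_three_lines (k : Type*) [Field k]
    (p : Polynomial k × Polynomial k × Polynomial k) :
    ((∀ q : Polynomial k × Polynomial k × Polynomial k,
        p * q ∈ (MvPolynomial.aeval
          (![(Polynomial.X, Polynomial.X, (0 : Polynomial k)),
             (Polynomial.X, (0 : Polynomial k), Polynomial.X)] :
            Fin 2 → Polynomial k × Polynomial k × Polynomial k) :
          MvPolynomial (Fin 2) k →ₐ[k] Polynomial k × Polynomial k × Polynomial k).range) ↔
      p ∈ Ideal.span
        ({((Polynomial.X ^ 2 : Polynomial k), (Polynomial.X ^ 2 : Polynomial k),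
            (0 : Polynomial k)),
          ((Polynomial.X ^ 2 : Polynomial k), (0 : Polynomial k),
            (Polynomial.X ^ 2 : Polynomial k)),
          ((Polynomial.X ^ 2 : Polynomial k), (0 : Polynomial k), (0 : Polynomial k))} :
          Set (Polynomial k × Polynomial k × Polynomial k))) ∧
    ((∀ q : Polynomial k × Polynomial k × Polynomial k,
        p * q ∈ (MvPolynomial.aeval
          (![(Polynomial.X, Polynomial.X, (0 : Polynomial k)),
             (Polynomial.X, (0 : Polynomial k), Polynomial.X)] :
            Fin 2 → Polynomial k × Polynomial k × Polynomial k) :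
          MvPolynomial (Fin 2) k →ₐ[k] Polynomial k × Polynomial k × Polynomial k).range) ↔
      (p.1 ∈ Ideal.span ({Polynomial.X ^ 2} : Set (Polynomial k)) ∧
       p.2.1 ∈ Ideal.span ({Polynomial.X ^ 2} : Set (Polynomial k)) ∧
       p.2.2 ∈ Ideal.span ({Polynomial.X ^ 2} : Set (Polynomial k)))) := by
  have key := ThreeLinesAux.conductor_iff k p
  have hspan := ThreeLinesAux.span_iff k p
  exact ⟨key.trans hspan.symm, key⟩
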